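/- Let k ≥ 2 and let X_1,...,X_k be i.i.d. random variables with absolutely continuous distribution function F. Denote X_{1,k} = min(X_1,...,X_k) and X_{k,k} = max(X_1,...,X_k). Then |X_{1,k}| and |X_{k,k}| are identically distributed if and only if F is symmetric about zero, i.e., 1 − F(x) − F(−x) = 0 for all x ∈ ℝ. -/

import Mathlib

open MeasureTheory ProbabilityTheory Filter Topology Set

lemma ahs_g_mono {k : ℕ} (hk : 2 ≤ k) :
    StrictMonoOn (fun t : ℝ => t ^ k + (1 - t) ^ k) (Set.Icc (1/2 : ℝ) 1) := by
  intro s hs t ht hst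
  simp only [Set.mem_Icc] at hs ht
  have h1s : (0:ℝ) ≤ 1 - s := by linarith [ht.2]
  have h1t : (0:ℝ) ≤ 1 - t := by linarith [ht.2]
  have ht0 : (0:ℝ) ≤ t := by linarith [ht.1]
  have hs0 : (0:ℝ) ≤ s := by linarith [hs.1]
  have key : (∑ i ∈ Finset.range k, (1-s) ^ i * (1-t) ^ (k - 1 - i))
      < ∑ i ∈ Finset.range k, t ^ i * s ^ (k - 1 - i) := by
    apply Finset.sum_lt_sum
    · intro i _
      exact mul_le_mul (pow_le_pow_left₀ h1s (by linarith [hs.1]) i)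
        (pow_le_pow_left₀ h1t (by linarith [hs.1, hst]) _)
        (pow_nonneg h1t _) (pow_nonneg ht0 _)
    · refine ⟨k - 1, Finset.mem_range.2 (by omega), ?_⟩
      have : (1-s) ^ (k-1) < t ^ (k-1) :=
        pow_lt_pow_left₀ (by linarith [hs.1]) h1s (by omega)
      calc (1-s) ^ (k-1) * (1-t) ^ (k - 1 - (k-1)) = (1-s)^(k-1) := by simp
        _ < t ^ (k-1) := this
        _ = t ^ (k-1) * s ^ (k - 1 - (k-1)) := by simp
  have e1 : t ^ k - s ^ k = (∑ i ∈ Finset.range k, t ^ i * s ^ (k - 1 - i)) * (t - s) :=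
    (geom_sum₂_mul t s k).symm
  have e2 : (1-s) ^ k - (1-t) ^ k
      = (∑ i ∈ Finset.range k, (1-s) ^ i * (1-t) ^ (k - 1 - i)) * (t - s) := by
    have h2 := geom_sum₂_mul (1-s) (1-t) k
    have h : (1-s) - (1-t) = t - s := by ring
    rw [h] at h2
    exact h2.symm
  have hts : (0:ℝ) < t - s := by linarith
  have := mul_lt_mul_of_pos_right key hts
  rw [← e1, ← e2] at this
  simp only []
  linarith

lemma ahs_g_cases {k : ℕ} (hk : 2 ≤ k) {a b : ℝ} (ha : a ∈ Set.Icc (0:ℝ) 1)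
    (hb : b ∈ Set.Icc (0:ℝ) 1)
    (h : a ^ k + (1 - a) ^ k = b ^ k + (1 - b) ^ k) : a = b ∨ a + b = 1 := by
  obtain ⟨ha0, ha1⟩ := ha
  obtain ⟨hb0, hb1⟩ := hb
  set a' := max a (1 - a) with ha'
  set b' := max b (1 - b) with hb'
  have hga : a' ^ k + (1 - a') ^ k = a ^ k + (1 - a) ^ k := by
    rcases max_choice a (1 - a) with h' | h' <;> rw [ha', h'] <;> ring_nf
  have hgb : b' ^ k + (1 - b') ^ k = b ^ k + (1 - b) ^ k := by
    rcases max_choice b (1 - b) with h' | h' <;> rw [hb', h'] <;> ring_nf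
  have ha'm : a' ∈ Set.Icc (1/2 : ℝ) 1 := by
    constructor
    · rcases le_total a (1/2) with h' | h'
      · exact le_max_of_le_right (by linarith)
      · exact le_max_of_le_left h'
    · exact max_le ha1 (by linarith)
  have hb'm : b' ∈ Set.Icc (1/2 : ℝ) 1 := by
    constructor
    · rcases le_total b (1/2) with h' | h'
      · exact le_max_of_le_right (by linarith)
      · exact le_max_of_le_left h'
    · exact max_le hb1 (by linarith)
  have : a' = b' := (ahs_g_mono hk).injOn ha'm hb'm (by
    show a' ^ k + (1 - a') ^ k = b' ^ k + (1 - b') ^ k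
    skip
    rw [hga, hgb, h])
  rcases max_choice a (1 - a) with h1 | h1 <;> rcases max_choice b (1 - b) with h2 | h2 <;>
    rw [ha', h1] at this <;> rw [hb', h2] at this
  · exact Or.inl this
  · exact Or.inr (by linarith)
  · exact Or.inr (by linarith)
  · exact Or.inl (by linarith)

lemma ahs_symm_of_cases (F : ℝ → ℝ) (hmono : Monotone F) (hcont : Continuous F)
    (htop : Tendsto F atTop (𝓝 1)) (hbot : Tendsto F atBot (𝓝 0))
    (hcases : ∀ x : ℝ, F x = F (-x) ∨ F x + F (-x) = 1) :
    ∀ x, F x + F (-x) = 1 := by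
  by_contra hc
  push_neg at hc
  obtain ⟨x₁, hx₁⟩ := hc
  -- wlog x₀ ≥ 0
  have : ∃ x₀ : ℝ, 0 ≤ x₀ ∧ F x₀ + F (-x₀) ≠ 1 := by
    rcases le_total 0 x₁ with h | h
    · exact ⟨x₁, h, hx₁⟩
    · exact ⟨-x₁, by linarith, by rw [neg_neg]; intro h'; exact hx₁ (by linarith)⟩
  obtain ⟨x₀, hx₀, hne⟩ := this
  have hFeq : F x₀ = F (-x₀) := (hcases x₀).resolve_right hne
  set c := F x₀ with hc'
  have hc2 : 2 * c ≠ 1 := by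
    intro h; apply hne; rw [← hFeq]; linarith
  set T := {y : ℝ | x₀ ≤ y ∧ F y = c ∧ F (-y) = c} with hT
  have hx₀T : x₀ ∈ T := ⟨le_refl _, rfl, hFeq.symm⟩
  -- key step: from any element of T, produce a bigger one... handled below.
  by_cases hbdd : BddAbove T
  · -- T closed, take sSup
    have hTclosed : IsClosed T := by
      have : T = Ici x₀ ∩ (F ⁻¹' {c} ∩ ((fun y => F (-y)) ⁻¹' {c})) := by
        ext y
        simp only [hT, Set.mem_setOf_eq, Set.mem_inter_iff, Set.mem_Ici,
          Set.mem_preimage, Set.mem_singleton_iff, and_assoc]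
      rw [this]
      exact isClosed_Ici.inter ((isClosed_singleton.preimage hcont).inter
        (isClosed_singleton.preimage (hcont.comp continuous_neg)))
    have hsT : sSup T ∈ T := hTclosed.csSup_mem ⟨x₀, hx₀T⟩ hbdd
    set s := sSup T with hs
    obtain ⟨hsx₀, hFs, hFns⟩ := hsT
    -- h z ≠ 0 near s
    have hHcont : Continuous (fun y => F y + F (-y) - 1) :=
      (hcont.add (hcont.comp continuous_neg)).sub continuous_const
    have hHs : F s + F (-s) - 1 ≠ 0 := by rw [hFs, hFns]; intro h; exact hc2 (by linarith)
    have hev : ∀ᶠ z in 𝓝 s, F z + F (-z) - 1 ≠ 0 :=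
      hHcont.continuousAt.eventually_ne hHs
    obtain ⟨ε, hε, hball⟩ := Metric.eventually_nhds_iff.1 hev
    set z := s + ε / 2 with hz
    have hzs : s < z := by simp [hz]; linarith
    have hzball : dist z s < ε := by
      simp [hz, Real.dist_eq]
      rw [abs_of_pos (by linarith)]
      linarith
    have hHz : F z + F (-z) - 1 ≠ 0 := hball hzball
    have hFz : F z = F (-z) := (hcases z).resolve_right (fun h => hHz (by linarith))
    -- squeeze
    have h1 : F (-z) ≤ F (-s) := hmono (by linarith)
    have h2 : F s ≤ F z := hmono (by linarith)
    have hFzc : F z = c ∧ F (-z) = c := by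
      constructor <;> linarith [h1, h2, hFz, hFs, hFns]
    have : z ∈ T := ⟨by linarith, hFzc.1, hFzc.2⟩
    exact absurd (le_csSup hbdd this) (by linarith)
  · -- T unbounded: F constant c on [x₀, ∞) and on (-∞, -x₀]
    have hconst : ∀ y, x₀ ≤ y → F y = c ∧ F (-y) = c := by
      intro y hy
      obtain ⟨z, hzT, hzy⟩ := not_bddAbove_iff.1 hbdd y
      obtain ⟨hzx₀, hFz, hFnz⟩ := hzT
      constructor
      · exact le_antisymm (hFz ▸ hmono hzy.le) (hc' ▸ hmono hy)
      · exact le_antisymm (hFeq ▸ hmono (by linarith)) (hFnz ▸ hmono (by linarith))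
    have h1 : Tendsto F atTop (𝓝 c) := by
      apply Tendsto.congr' _ tendsto_const_nhds
      filter_upwards [eventually_ge_atTop x₀] with y hy
      exact (hconst y hy).1.symm
    have hc1 : c = 1 := tendsto_nhds_unique h1 htop
    have h2 : Tendsto (fun y => F (-y)) atTop (𝓝 c) := by
      apply Tendsto.congr' _ tendsto_const_nhds
      filter_upwards [eventually_ge_atTop x₀] with y hy
      exact (hconst y hy).2.symm
    have hc0 : c = 0 := tendsto_nhds_unique h2 (hbot.comp tendsto_neg_atTop_atBot)
    linarith [hc0, hc1]

lemma ahs_cdf_continuous (μ : Measure ℝ) [IsProbabilityMeasure μ]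
    (h : ∀ x : ℝ, μ {x} = 0) : Continuous (cdf μ) := by
  rw [continuous_iff_continuousAt]
  intro x
  rw [(cdf μ).mono.continuousAt_iff_leftLim_eq_rightLim, (cdf μ).rightLim_eq]
  have hm : (cdf μ).measure {x} = 0 := by rw [measure_cdf]; exact h x
  rw [StieltjesFunction.measure_singleton] at hm
  have h1 : cdf μ x - Function.leftLim (cdf μ) x ≤ 0 := by
    by_contra h'
    push_neg at h'
    exact absurd hm (by simp [ENNReal.ofReal_eq_zero]; linarith)
  have h2 : Function.leftLim (cdf μ) x ≤ cdf μ x := (cdf μ).mono.leftLim_le le_rfl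
  linarith

lemma ahs_meas_Iio {μ : Measure ℝ} {a : ℝ} (h : μ {a} = 0) : μ (Iio a) = μ (Iic a) := by
  refine le_antisymm (measure_mono Iio_subset_Iic_self) ?_
  calc μ (Iic a) = μ (Iio a ∪ {a}) := by rw [Iio_union_right]
    _ ≤ μ (Iio a) + μ {a} := measure_union_le _ _
    _ = μ (Iio a) := by rw [h, add_zero]

lemma ahs_meas_Ioi {μ : Measure ℝ} {a : ℝ} (h : μ {a} = 0) : μ (Ioi a) = μ (Ici a) := by
  refine le_antisymm (measure_mono Ioi_subset_Ici_self) ?_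
  calc μ (Ici a) = μ (Ioi a ∪ {a}) := by rw [Ioi_union_left]
    _ ≤ μ (Ioi a) + μ {a} := measure_union_le _ _
    _ = μ (Ioi a) := by rw [h, add_zero]

theorem ahsanullah_characterization_symmetry
    {Ω : Type*} [MeasureSpace Ω] [IsProbabilityMeasure (ℙ : Measure Ω)]
    (k : ℕ) (hk : 2 ≤ k)
    (X : Fin k → Ω → ℝ) (hX : ∀ i, Measurable (X i))
    (hindep : iIndepFun X ℙ)
    (hid : ∀ i, Measure.map (X i) ℙ = Measure.map (X ⟨0, by omega⟩) ℙ)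
    (hac : Measure.map (X ⟨0, by omega⟩) ℙ ≪ (volume : Measure ℝ))
    (F : ℝ → ℝ) (hF : F = fun x => ((Measure.map (X ⟨0, by omega⟩) ℙ) (Set.Iic x)).toReal) :
    Measure.map (fun ω =>
        |Finset.univ.inf' ⟨⟨0, by omega⟩, Finset.mem_univ _⟩ (fun i => X i ω)|) ℙ
      = Measure.map (fun ω =>
        |Finset.univ.sup' ⟨⟨0, by omega⟩, Finset.mem_univ _⟩ (fun i => X i ω)|) ℙ ↔
      ∀ x : ℝ, 1 - F x - F (-x) = 0 := by
  have hne : (Finset.univ : Finset (Fin k)).Nonempty := ⟨⟨0, by omega⟩, Finset.mem_univ _⟩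
  set μ₀ : Measure ℝ := Measure.map (X ⟨0, by omega⟩) ℙ with hμ₀
  haveI : IsProbabilityMeasure μ₀ := Measure.isProbabilityMeasure_map (hX _).aemeasurable
  -- atoms
  have hatom : ∀ a : ℝ, μ₀ {a} = 0 := fun a => hac (Real.volume_singleton)
  -- basic F facts
  have hF0 : ∀ t, 0 ≤ F t := by intro t; rw [hF]; exact ENNReal.toReal_nonneg
  have hF1 : ∀ t, F t ≤ 1 := by
    intro t; rw [hF]
    exact ENNReal.toReal_le_of_le_ofReal zero_le_one (by simpa using prob_le_one)
  have hofReal : ∀ t, ENNReal.ofReal (F t) = μ₀ (Iic t) := by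
    intro t; rw [hF]; exact ENNReal.ofReal_toReal (measure_ne_top _ _)
  have hmono : Monotone F := by
    intro a b hab
    rw [hF]
    exact ENNReal.toReal_mono (measure_ne_top _ _) (measure_mono (Iic_subset_Iic.2 hab))
  have hFcdf : F = fun x => cdf μ₀ x := by
    funext t; rw [hF, cdf_eq_real, Measure.real]
  -- min and max
  set m : Ω → ℝ := fun ω => Finset.univ.inf' hne (fun i => X i ω) with hm'
  set M : Ω → ℝ := fun ω => Finset.univ.sup' hne (fun i => X i ω) with hM'
  have hMIic : ∀ x : ℝ, M ⁻¹' Iic x = ⋂ i, X i ⁻¹' Iic x := by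
    intro x; ext ω; simp [hM', Finset.sup'_le_iff]
  have hmIoi : ∀ x : ℝ, m ⁻¹' Ioi x = ⋂ i, X i ⁻¹' Ioi x := by
    intro x; ext ω; simp [hm', Finset.lt_inf'_iff]
  have hM : Measurable M := measurable_of_Iic fun x => by
    rw [hMIic]; exact MeasurableSet.iInter fun i => (hX i) measurableSet_Iic
  have hm : Measurable m := measurable_of_Ioi fun x => by
    rw [hmIoi]; exact MeasurableSet.iInter fun i => (hX i) measurableSet_Ioi
  -- laws of min / max
  have hXIic : ∀ (i : Fin k) (x : ℝ), ℙ (X i ⁻¹' Iic x) = μ₀ (Iic x) := by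
    intro i x
    rw [← Measure.map_apply (hX i) measurableSet_Iic, hid i]
  have hXIoi : ∀ (i : Fin k) (x : ℝ), ℙ (X i ⁻¹' Ioi x) = μ₀ (Ioi x) := by
    intro i x
    rw [← Measure.map_apply (hX i) measurableSet_Ioi, hid i]
  have hMap : ∀ x : ℝ, (Measure.map M ℙ) (Iic x) = μ₀ (Iic x) ^ k := by
    intro x
    rw [Measure.map_apply hM measurableSet_Iic, hMIic,
      hindep.meas_iInter (fun i => ⟨Iic x, measurableSet_Iic, rfl⟩)]
    simp only [hXIic]
    rw [Finset.prod_const, Finset.card_univ, Fintype.card_fin]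
  have hmap : ∀ x : ℝ, (Measure.map m ℙ) (Ioi x) = μ₀ (Ioi x) ^ k := by
    intro x
    rw [Measure.map_apply hm measurableSet_Ioi, hmIoi,
      hindep.meas_iInter (fun i => ⟨Ioi x, measurableSet_Ioi, rfl⟩)]
    simp only [hXIoi]
    rw [Finset.prod_const, Finset.card_univ, Fintype.card_fin]
  -- atomlessness of min / max laws
  have hXatom : ∀ (i : Fin k) (a : ℝ), ℙ (X i ⁻¹' {a}) = 0 := by
    intro i a
    rw [← Measure.map_apply (hX i) (measurableSet_singleton a), hid i]
    exact hatom a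
  have hMatom : ∀ a : ℝ, (Measure.map M ℙ) {a} = 0 := by
    intro a
    rw [Measure.map_apply hM (measurableSet_singleton a)]
    refine measure_mono_null (fun ω hω => ?_) (measure_iUnion_null fun i => hXatom i a)
    obtain ⟨i, _, hi⟩ := Finset.exists_mem_eq_sup' hne (fun i => X i ω)
    refine mem_iUnion.2 ⟨i, ?_⟩
    simp only [mem_preimage, mem_singleton_iff] at hω ⊢
    rw [← hi]
    exact hω
  have hmatom : ∀ a : ℝ, (Measure.map m ℙ) {a} = 0 := by
    intro a
    rw [Measure.map_apply hm (measurableSet_singleton a)]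
    refine measure_mono_null (fun ω hω => ?_) (measure_iUnion_null fun i => hXatom i a)
    obtain ⟨i, _, hi⟩ := Finset.exists_mem_eq_inf' hne (fun i => X i ω)
    refine mem_iUnion.2 ⟨i, ?_⟩
    simp only [mem_preimage, mem_singleton_iff] at hω ⊢
    rw [← hi]
    exact hω
  -- complement formula
  have hIoiF : ∀ t : ℝ, μ₀ (Ioi t) = ENNReal.ofReal (1 - F t) := by
    intro t
    rw [← compl_Iic, measure_compl measurableSet_Iic (measure_ne_top _ _), measure_univ,
      ← hofReal t, ENNReal.ofReal_sub 1 (hF0 t), ENNReal.ofReal_one]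
  -- CDFs of |min| and |max|
  set ν₁ : Measure ℝ := Measure.map (fun ω => |m ω|) ℙ with hν₁'
  set ν₂ : Measure ℝ := Measure.map (fun ω => |M ω|) ℙ with hν₂'
  haveI : IsProbabilityMeasure ν₁ := Measure.isProbabilityMeasure_map (hm.abs).aemeasurable
  haveI : IsProbabilityMeasure ν₂ := Measure.isProbabilityMeasure_map (hM.abs).aemeasurable
  have habs_pre : ∀ (f : Ω → ℝ) (x : ℝ), (fun ω => |f ω|) ⁻¹' Iic x = f ⁻¹' Icc (-x) x := by
    intro f x; ext ω; simp [abs_le, and_comm]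
  have hν₂Iic : ∀ x : ℝ, 0 ≤ x →
      ν₂ (Iic x) = ENNReal.ofReal (F x ^ k - F (-x) ^ k) := by
    intro x hx
    rw [hν₂', Measure.map_apply hM.abs measurableSet_Iic, habs_pre,
      ← Measure.map_apply hM (measurableSet_Icc)]
    have hIcc : Icc (-x) x = Iic x \ Iio (-x) := by
      ext y; simp only [mem_Icc, mem_diff, mem_Iic, mem_Iio, not_lt]; tauto
    have hsub : Iio (-x) ⊆ Iic x := by
      intro y hy
      simp only [mem_Iio] at hy
      simp only [mem_Iic]
      linarith
    rw [hIcc, measure_diff hsub measurableSet_Iio.nullMeasurableSet (measure_ne_top _ _),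
      ahs_meas_Iio (hMatom (-x)), hMap, hMap, ← hofReal, ← hofReal,
      ← ENNReal.ofReal_pow (hF0 _), ← ENNReal.ofReal_pow (hF0 _),
      ← ENNReal.ofReal_sub _ (pow_nonneg (hF0 _) _)]
  have hν₁Iic : ∀ x : ℝ, 0 ≤ x →
      ν₁ (Iic x) = ENNReal.ofReal ((1 - F (-x)) ^ k - (1 - F x) ^ k) := by
    intro x hx
    rw [hν₁', Measure.map_apply hm.abs measurableSet_Iic, habs_pre,
      ← Measure.map_apply hm (measurableSet_Icc)]
    have hIcc : Icc (-x) x = Ici (-x) \ Ioi x := by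
      ext y; simp only [mem_Icc, mem_diff, mem_Ici, mem_Ioi, not_lt]
    have hsub : Ioi x ⊆ Ici (-x) := by
      intro y hy
      simp only [mem_Ioi] at hy
      simp only [mem_Ici]
      linarith
    rw [hIcc, measure_diff hsub measurableSet_Ioi.nullMeasurableSet (measure_ne_top _ _),
      ← ahs_meas_Ioi (hmatom (-x)), hmap, hmap, hIoiF, hIoiF,
      ← ENNReal.ofReal_pow (by linarith [hF1 (-x)]), ← ENNReal.ofReal_pow (by linarith [hF1 x]),
      ← ENNReal.ofReal_sub _ (pow_nonneg (by linarith [hF1 x]) _)]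
  have hzero : ∀ (ν : Measure ℝ), (∀ a : ℝ, 0 ≤ a → ν (Iic a) = 0 → True) → True := fun _ _ => trivial
  have hν₁neg : ∀ x : ℝ, x < 0 → ν₁ (Iic x) = 0 := by
    intro x hx
    rw [hν₁', Measure.map_apply hm.abs measurableSet_Iic]
    convert measure_empty (μ := (ℙ : Measure Ω))
    ext ω; simp only [mem_preimage, mem_Iic, mem_empty_iff_false, iff_false, not_le]
    exact lt_of_lt_of_le hx (abs_nonneg _)
  have hν₂neg : ∀ x : ℝ, x < 0 → ν₂ (Iic x) = 0 := by
    intro x hx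
    rw [hν₂', Measure.map_apply hM.abs measurableSet_Iic]
    convert measure_empty (μ := (ℙ : Measure Ω))
    ext ω; simp only [mem_preimage, mem_Iic, mem_empty_iff_false, iff_false, not_le]
    exact lt_of_lt_of_le hx (abs_nonneg _)
  -- nonnegativity of the real expressions
  have hFle : ∀ x : ℝ, 0 ≤ x → F (-x) ≤ F x := fun x hx => hmono (by linarith)
  have hd₂ : ∀ x : ℝ, 0 ≤ x → 0 ≤ F x ^ k - F (-x) ^ k := by
    intro x hx
    have := pow_le_pow_left₀ (hF0 (-x)) (hFle x hx) k
    linarith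
  have hd₁ : ∀ x : ℝ, 0 ≤ x → 0 ≤ (1 - F (-x)) ^ k - (1 - F x) ^ k := by
    intro x hx
    have h1 : (0:ℝ) ≤ 1 - F x := by linarith [hF1 x]
    have h2 : 1 - F x ≤ 1 - F (-x) := by linarith [hFle x hx]
    have := pow_le_pow_left₀ h1 h2 k
    linarith
  -- the key equivalence
  have key : ν₁ = ν₂ ↔ ∀ x : ℝ, 0 ≤ x →
      (1 - F (-x)) ^ k - (1 - F x) ^ k = F x ^ k - F (-x) ^ k := by
    constructor
    · intro h x hx
      have := congrArg (fun ν : Measure ℝ => ν (Iic x)) h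
      simp only [hν₁Iic x hx, hν₂Iic x hx] at this
      exact (ENNReal.ofReal_eq_ofReal_iff (hd₁ x hx) (hd₂ x hx)).1 this
    · intro h
      refine Measure.ext_of_Iic ν₁ ν₂ fun a => ?_
      rcases le_or_gt 0 a with ha | ha
      · rw [hν₁Iic a ha, hν₂Iic a ha, h a ha]
      · rw [hν₁neg a ha, hν₂neg a ha]
  rw [key]
  constructor
  · -- hard direction
    intro h x
    -- dichotomy for all x
    have hcases : ∀ y : ℝ, F y = F (-y) ∨ F y + F (-y) = 1 := by
      have hcases' : ∀ y : ℝ, 0 ≤ y → F y = F (-y) ∨ F y + F (-y) = 1 := by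
        intro y hy
        have hE := h y hy
        have hg : F y ^ k + (1 - F y) ^ k = F (-y) ^ k + (1 - F (-y)) ^ k := by linarith
        rcases ahs_g_cases hk ⟨hF0 y, hF1 y⟩ ⟨hF0 (-y), hF1 (-y)⟩ hg with h' | h'
        · exact Or.inl h'
        · exact Or.inr (by linarith)
      intro y
      rcases le_or_gt 0 y with hy | hy
      · exact hcases' y hy
      · rcases hcases' (-y) (by linarith) with h' | h'
        · rw [neg_neg] at h'; exact Or.inl h'.symm
        · rw [neg_neg] at h'; exact Or.inr (by linarith)
    have hsym := ahs_symm_of_cases F hmono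
      (by rw [hFcdf]; exact (ahs_cdf_continuous μ₀ hatom))
      (by rw [hFcdf]; exact tendsto_cdf_atTop μ₀)
      (by rw [hFcdf]; exact tendsto_cdf_atBot μ₀) hcases
    linarith [hsym x]
  · intro hsym x hx
    have h1 : 1 - F (-x) = F x := by linarith [hsym x]
    have h2 : 1 - F x = F (-x) := by linarith [hsym x]
    rw [h1, h2]
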